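/- Let (B,∘) be a finite-dimensional Leibniz algebra and r ∈ B⊗B symmetric. Then r is a solution of the Leibniz Yang–Baxter equation r₁₂∘r₁₃ − r₁₂∘r₂₃ − r₂₃∘r₁₂ + r₂₃∘r₁₃ = 0 if and only if r♯: B* → B is an O-operator of (B,∘) associated to the coregular representation (B*, −ℓ∘*, ℓ∘* + r∘*). -/

import Mathlib

open TensorProduct

/-- A symmetric `r ∈ B⊗B` is a solution of the Leibniz Yang–Baxter equation iff
`r♯` is an O-operator of `(B,∘)` associated to the coregular representation. -/
theorem LYBE_iff_O_operator (K B : Type*) [Field K] [CharZero K]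
    [AddCommGroup B] [Module K B] [FiniteDimensional K B]
    (mul : B →ₗ[K] B →ₗ[K] B)
    (hleib : ∀ b₁ b₂ b₃ : B,
      mul b₁ (mul b₂ b₃) = mul (mul b₁ b₂) b₃ + mul b₂ (mul b₁ b₃))
    (m : ℕ) (x y : Fin m → B)
    (hsym : ∑ i, x i ⊗ₜ[K] y i = ∑ i, y i ⊗ₜ[K] x i)
    (rs : Module.Dual K B →ₗ[K] B)
    (hrs : ∀ ξ₁ ξ₂ : Module.Dual K B, ξ₂ (rs ξ₁) = ∑ i, ξ₁ (x i) * ξ₂ (y i)) :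
    (∑ i, ∑ j,
        (((mul (x i) (x j)) ⊗ₜ[K] y i) ⊗ₜ[K] y j
          - (x i ⊗ₜ[K] mul (y i) (x j)) ⊗ₜ[K] y j
          - (x i ⊗ₜ[K] mul (x j) (y i)) ⊗ₜ[K] y j
          + (x i ⊗ₜ[K] x j) ⊗ₜ[K] mul (y j) (y i)) = 0) ↔
    (∀ ξ₁ ξ₂ : Module.Dual K B,
      mul (rs ξ₁) (rs ξ₂) =
        rs (-((mul (rs ξ₁)).dualMap ξ₂)
            + (mul (rs ξ₂)).dualMap ξ₁ + (mul.flip (rs ξ₂)).dualMap ξ₁)) := by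
  classical
  have hdual : ∀ a c : B, (∀ φ : Module.Dual K B, φ a = φ c) → a = c := by
    intro a c h
    rw [← sub_eq_zero]
    exact (Module.forall_dual_apply_eq_zero_iff K _).mp (fun φ => by simp [h φ])
  set p2 : Module.Dual K B → Module.Dual K B → (B ⊗[K] B →ₗ[K] K) :=
    fun φ ψ => TensorProduct.lift ((LinearMap.mul K K).compl₁₂ φ ψ) with hp2
  have p2_tmul : ∀ φ ψ (a c : B), p2 φ ψ (a ⊗ₜ[K] c) = φ a * ψ c := by
    intro φ ψ a c; simp [hp2]
  set p3 : Module.Dual K B → Module.Dual K B → Module.Dual K B →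
      ((B ⊗[K] B) ⊗[K] B →ₗ[K] K) :=
    fun φ ψ χ => TensorProduct.lift ((LinearMap.mul K K).compl₁₂ (p2 φ ψ) χ) with hp3
  have p3_tmul : ∀ φ ψ χ (a c d : B),
      p3 φ ψ χ ((a ⊗ₜ[K] c) ⊗ₜ[K] d) = φ a * ψ c * χ d := by
    intro φ ψ χ a c d; simp [hp3, p2_tmul]
  have hsympair : ∀ φ ψ : Module.Dual K B,
      ∑ i, φ (x i) * ψ (y i) = ∑ i, φ (y i) * ψ (x i) := by
    intro φ ψ
    have := congrArg (p2 φ ψ) hsym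
    simpa [map_sum, p2_tmul] using this
  have hT : ∀ ξ : Module.Dual K B, rs ξ = ∑ i, ξ (x i) • y i := by
    intro ξ
    apply hdual; intro φ
    simp [hrs ξ φ, map_sum, map_smul, smul_eq_mul]
  have hT' : ∀ ξ : Module.Dual K B, rs ξ = ∑ i, ξ (y i) • x i := by
    intro ξ
    apply hdual; intro φ
    rw [hrs ξ φ, hsympair ξ φ]
    simp [map_sum, map_smul, smul_eq_mul]
  have hsymT : ∀ φ ψ : Module.Dual K B, φ (rs ψ) = ψ (rs φ) := by
    intro φ ψ
    rw [hrs ψ φ, hrs φ ψ, hsympair ψ φ]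
    exact Finset.sum_congr rfl (fun i _ => mul_comm _ _)
  -- the four expansion lemmas
  have l1 : ∀ ξ₁ ξ₂ ξ₃ : Module.Dual K B,
      ξ₁ (mul (rs ξ₂) (rs ξ₃)) = ∑ i, ∑ j, ξ₁ (mul (x i) (x j)) * ξ₂ (y i) * ξ₃ (y j) := by
    intro ξ₁ ξ₂ ξ₃
    rw [hT' ξ₂, hT' ξ₃]
    simp only [map_sum, map_smul, LinearMap.sum_apply, LinearMap.smul_apply,
      smul_eq_mul, Finset.mul_sum, Finset.sum_mul]
    rw [Finset.sum_comm]
    exact Finset.sum_congr rfl fun i _ => Finset.sum_congr rfl fun j _ => by ring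
  have l2 : ∀ ξ₁ ξ₂ ξ₃ : Module.Dual K B,
      ξ₂ (mul (rs ξ₁) (rs ξ₃)) = ∑ i, ∑ j, ξ₁ (x i) * ξ₂ (mul (y i) (x j)) * ξ₃ (y j) := by
    intro ξ₁ ξ₂ ξ₃
    rw [hT ξ₁, hT' ξ₃]
    simp only [map_sum, map_smul, LinearMap.sum_apply, LinearMap.smul_apply,
      smul_eq_mul, Finset.mul_sum, Finset.sum_mul]
    rw [Finset.sum_comm]
    exact Finset.sum_congr rfl fun i _ => Finset.sum_congr rfl fun j _ => by ring
  have l3 : ∀ ξ₁ ξ₂ ξ₃ : Module.Dual K B,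
      ξ₂ (mul (rs ξ₃) (rs ξ₁)) = ∑ i, ∑ j, ξ₁ (x i) * ξ₂ (mul (x j) (y i)) * ξ₃ (y j) := by
    intro ξ₁ ξ₂ ξ₃
    rw [hT' ξ₃, hT ξ₁]
    simp only [map_sum, map_smul, LinearMap.sum_apply, LinearMap.smul_apply,
      smul_eq_mul, Finset.mul_sum, Finset.sum_mul]
    exact Finset.sum_congr rfl fun i _ => Finset.sum_congr rfl fun j _ => by ring
  have l4 : ∀ ξ₁ ξ₂ ξ₃ : Module.Dual K B,
      ξ₃ (mul (rs ξ₂) (rs ξ₁)) = ∑ i, ∑ j, ξ₁ (x i) * ξ₂ (x j) * ξ₃ (mul (y j) (y i)) := by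
    intro ξ₁ ξ₂ ξ₃
    rw [hT ξ₂, hT ξ₁]
    simp only [map_sum, map_smul, LinearMap.sum_apply, LinearMap.smul_apply,
      smul_eq_mul, Finset.mul_sum, Finset.sum_mul]
    exact Finset.sum_congr rfl fun i _ => Finset.sum_congr rfl fun j _ => by ring
  -- key: pairing of the LYBE tensor
  have key : ∀ ξ₁ ξ₂ ξ₃ : Module.Dual K B,
      p3 ξ₁ ξ₂ ξ₃ (∑ i, ∑ j,
        (((mul (x i) (x j)) ⊗ₜ[K] y i) ⊗ₜ[K] y j
          - (x i ⊗ₜ[K] mul (y i) (x j)) ⊗ₜ[K] y j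
          - (x i ⊗ₜ[K] mul (x j) (y i)) ⊗ₜ[K] y j
          + (x i ⊗ₜ[K] x j) ⊗ₜ[K] mul (y j) (y i)))
      = ξ₁ (mul (rs ξ₂) (rs ξ₃)) - ξ₂ (mul (rs ξ₁) (rs ξ₃))
        - ξ₂ (mul (rs ξ₃) (rs ξ₁)) + ξ₃ (mul (rs ξ₂) (rs ξ₁)) := by
    intro ξ₁ ξ₂ ξ₃
    rw [l1 ξ₁ ξ₂ ξ₃, l2 ξ₁ ξ₂ ξ₃, l3 ξ₁ ξ₂ ξ₃, l4 ξ₁ ξ₂ ξ₃]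
    simp [map_sum, map_sub, map_add, p3_tmul, Finset.sum_sub_distrib, Finset.sum_add_distrib]
  constructor
  · intro h ξ₁ ξ₂
    apply hdual; intro φ
    have h0 := key ξ₂ ξ₁ φ
    rw [h, map_zero] at h0
    have hR : φ (rs (-((mul (rs ξ₁)).dualMap ξ₂)
        + (mul (rs ξ₂)).dualMap ξ₁ + (mul.flip (rs ξ₂)).dualMap ξ₁))
        = -ξ₂ (mul (rs ξ₁) (rs φ)) + ξ₁ (mul (rs ξ₂) (rs φ)) + ξ₁ (mul (rs φ) (rs ξ₂)) := by
      rw [hsymT φ _]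
      simp [LinearMap.dualMap_apply, LinearMap.flip_apply]
    rw [hR]
    linear_combination -h0
  · intro h
    have hOs : ∀ ξ₁ ξ₂ ξ₃ : Module.Dual K B,
        ξ₃ (mul (rs ξ₂) (rs ξ₁)) = -(ξ₁ (mul (rs ξ₂) (rs ξ₃))) + ξ₂ (mul (rs ξ₁) (rs ξ₃))
          + ξ₂ (mul (rs ξ₃) (rs ξ₁)) := by
      intro ξ₁ ξ₂ ξ₃
      have := congrArg ξ₃ (h ξ₂ ξ₁)
      rw [this, hsymT ξ₃ _]
      simp [LinearMap.dualMap_apply, LinearMap.flip_apply]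
    let b := Module.finBasis K B
    have coordrep : ∀ (p q s : Fin (Module.finrank K B)) (t : (B ⊗[K] B) ⊗[K] B),
        p3 (b.coord p) (b.coord q) (b.coord s) t
          = ((b.tensorProduct b).tensorProduct b).repr t ((p, q), s) := by
      intro p q s t
      induction t using TensorProduct.induction_on with
      | zero => simp
      | add u v hu hv => simp [map_add, hu, hv]
      | tmul u d =>
        induction u using TensorProduct.induction_on with
        | zero => simp
        | add u v hu hv => rw [add_tmul]; simp only [map_add, Finsupp.add_apply, hu, hv]
        | tmul a c =>
          simp [p3_tmul, Module.Basis.tensorProduct_repr_tmul_apply, Module.Basis.coord_apply, smul_eq_mul]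
          ring
    have hz : (((b.tensorProduct b).tensorProduct b).repr (∑ i, ∑ j,
        (((mul (x i) (x j)) ⊗ₜ[K] y i) ⊗ₜ[K] y j
          - (x i ⊗ₜ[K] mul (y i) (x j)) ⊗ₜ[K] y j
          - (x i ⊗ₜ[K] mul (x j) (y i)) ⊗ₜ[K] y j
          + (x i ⊗ₜ[K] x j) ⊗ₜ[K] mul (y j) (y i)))) = 0 := by
      ext ⟨⟨p, q⟩, s⟩
      rw [Finsupp.zero_apply, ← coordrep p q s, key]
      linear_combination hOs (b.coord p) (b.coord q) (b.coord s)
    exact (((b.tensorProduct b).tensorProduct b).repr.map_eq_zero_iff).mp hz
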